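/- Let X = {P₁, P₂, P₃, P₄} be a four-point metric space with d(P₂,P₃) = a, d(P₁,P₃) = b, d(P₁,P₂) = c, d(P₁,P₄) = d, d(P₂,P₄) = e, d(P₃,P₄) = f, satisfying c + f ≤ b + e ≤ a + d. Then the map sending P₁ ↦ (e−d, c), P₂ ↦ (0,0), P₃ ↦ (b+e−d, a), P₄ ↦ (e, a−f) is an isometric embedding of X into the l∞ plane ℝ²_∞. -/
import Mathlib


/-- A four-point metric space with `d(P₂,P₃) = a`, `d(P₁,P₃) = b`,
`d(P₁,P₂) = c`, `d(P₁,P₄) = d`, `d(P₂,P₄) = e`, `d(P₃,P₄) = f` and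
`c + f ≤ b + e ≤ a + d` embeds isometrically in the `l∞` plane via
`P₁ ↦ (e−d, c)`, `P₂ ↦ (0,0)`, `P₃ ↦ (b+e−d, a)`, `P₄ ↦ (e, a−f)`. -/
theorem four_point_embeds {X : Type*} [MetricSpace X] (P₁ P₂ P₃ P₄ : X)
    (a b c d e f : ℝ)
    (ha : dist P₂ P₃ = a) (hb : dist P₁ P₃ = b) (hc : dist P₁ P₂ = c)
    (hd : dist P₁ P₄ = d) (he : dist P₂ P₄ = e) (hf : dist P₃ P₄ = f)
    (h1 : c + f ≤ b + e) (h2 : b + e ≤ a + d) :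
    dist ((e - d, c) : ℝ × ℝ) ((0, 0) : ℝ × ℝ) = c ∧
    dist ((e - d, c) : ℝ × ℝ) ((b + e - d, a) : ℝ × ℝ) = b ∧
    dist ((e - d, c) : ℝ × ℝ) ((e, a - f) : ℝ × ℝ) = d ∧
    dist ((0, 0) : ℝ × ℝ) ((b + e - d, a) : ℝ × ℝ) = a ∧
    dist ((0, 0) : ℝ × ℝ) ((e, a - f) : ℝ × ℝ) = e ∧
    dist ((b + e - d, a) : ℝ × ℝ) ((e, a - f) : ℝ × ℝ) = f := by
  have hc0 : 0 ≤ c := hc ▸ dist_nonneg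
  have ha0 : 0 ≤ a := ha ▸ dist_nonneg
  have hd0 : 0 ≤ d := hd ▸ dist_nonneg
  have he0 : 0 ≤ e := he ▸ dist_nonneg
  have hb0 : 0 ≤ b := hb ▸ dist_nonneg
  have hf0 : 0 ≤ f := hf ▸ dist_nonneg
  have t_de : |d - e| ≤ c := by
    rw [← hd, ← he, ← hc]; exact abs_dist_sub_le P₁ P₂ P₄
  have t_ca : |c - a| ≤ b := by
    rw [← hc, ← ha, ← hb, dist_comm P₂ P₃]; exact abs_dist_sub_le P₁ P₃ P₂
  have t_af : |a - f| ≤ e := by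
    rw [← ha, ← hf, ← he, dist_comm P₃ P₄]; exact abs_dist_sub_le P₂ P₄ P₃
  have t_bd : |b - d| ≤ f := by
    rw [← hb, ← hd, ← hf, dist_comm P₁ P₃, dist_comm P₁ P₄]
    exact abs_dist_sub_le P₃ P₄ P₁
  have u1 : e ≤ c + d := by rw [← he, ← hc, ← hd, dist_comm P₁ P₂]; exact dist_triangle P₂ P₁ P₄
  have u2 : a ≤ e + f := by
    rw [← ha, ← he, ← hf, dist_comm P₃ P₄]; exact dist_triangle P₂ P₄ P₃
  have u3 : d ≤ b + f := by rw [← hd, ← hb, ← hf]; exact dist_triangle P₁ P₃ P₄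
  have t_de' := abs_le.1 t_de
  have t_ca' := abs_le.1 t_ca
  have t_af' := abs_le.1 t_af
  have t_bd' := abs_le.1 t_bd
  simp only [Prod.dist_eq, Real.dist_eq]
  refine ⟨?_, ?_, ?_, ?_, ?_, ?_⟩
  · rw [sub_zero, sub_zero, abs_of_nonneg hc0, max_eq_right]
    exact abs_le.2 ⟨by linarith [t_de'.1, t_de'.2], by linarith [t_de'.1, t_de'.2]⟩
  · have h : e - d - (b + e - d) = -b := by ring
    rw [h, abs_neg, abs_of_nonneg hb0, max_eq_left]
    exact abs_le.2 ⟨by linarith [t_ca'.1, t_ca'.2], by linarith [t_ca'.1, t_ca'.2]⟩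
  · have h : e - d - e = -d := by ring
    rw [h, abs_neg, abs_of_nonneg hd0, max_eq_left]
    exact abs_le.2 ⟨by linarith [u2, u1], by linarith⟩
  · have h : (0:ℝ) - a = -a := by ring
    rw [h, abs_neg, abs_of_nonneg ha0, max_eq_right]
    exact abs_le.2 ⟨by linarith [u2, u3], by linarith⟩
  · have h : (0:ℝ) - e = -e := by ring
    rw [h, abs_neg, abs_of_nonneg he0, max_eq_left]
    have h2' : (0:ℝ) - (a - f) = -(a - f) := by ring
    rw [h2', abs_neg]; exact t_af
  · have h : b + e - d - e = b - d := by ring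
    have h2' : a - (a - f) = f := by ring
    rw [h, h2', abs_of_nonneg hf0, max_eq_right t_bd]
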